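/- Let ω = x dy + y dx + ω̃ be a germ of an integrable holomorphic 1-form at 0 ∈ ℂ², where ω̃ has vanishing 1-jet at 0, and suppose ω admits a holomorphic first integral of the form f·g with f, g ∈ O₂ irreducible, vanishing at 0, and in general position. Then the real analytic surface V = {Re f = Re g} ∩ {Im f = −Im g} passes through 0, is totally real off the origin, has contact order one with the foliation defined by ω off the origin, and the restriction of the foliation to V is a real analytic foliation all of whose leaves near 0 are compact curves (level sets of |f|²), i.e., the restriction has a center type singularity at 0. -/

import Mathlib

open Complex Filter

private lemma clm_apply_eq' (A : (ℂ × ℂ) →L[ℂ] ℂ) (v : ℂ × ℂ) :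
    A v = v.1 * A (1,0) + v.2 * A (0,1) := by
  have h : v = v.1 • ((1:ℂ),(0:ℂ)) + v.2 • ((0:ℂ),(1:ℂ)) := by ext <;> simp
  nth_rewrite 1 [h]
  rw [map_add, map_smul, map_smul]; simp [smul_eq_mul]

private lemma pointwise_main
    (Pp Qp fp : ℂ) (α β : (ℂ × ℂ) →L[ℂ] ℂ)
    (hΔ : α (1,0) * β (0,1) - α (0,1) * β (1,0) ≠ 0)
    (hPQ : ¬(Pp = 0 ∧ Qp = 0))
    (hfp : fp ≠ 0)
    (hker : ∀ v : ℂ × ℂ, Pp * v.1 + Qp * v.2 = 0 →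
      (starRingEnd ℂ) fp * α v + fp * β v = 0)
    (T K : Submodule ℝ (ℂ × ℂ))
    (hT : ∀ v, v ∈ T ↔ β v = (starRingEnd ℂ) (α v))
    (hK : ∀ v : ℂ × ℂ, v ∈ K ↔ Pp * v.1 + Qp * v.2 = 0) :
    (∀ v ∈ T, I • v ∈ T → v = 0) ∧ Module.finrank ℝ ↥(T ⊓ K) = 1 := by
  -- vectors killed by both α and β are zero
  have kill : ∀ u : ℂ × ℂ, α u = 0 → β u = 0 → u = 0 := by
    intro u hu1 hu2
    rw [clm_apply_eq'] at hu1 hu2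
    have h1 : u.1 * (α (1,0) * β (0,1) - α (0,1) * β (1,0)) = 0 := by
      linear_combination β (0,1) * hu1 - α (0,1) * hu2
    have h2 : u.2 * (α (1,0) * β (0,1) - α (0,1) * β (1,0)) = 0 := by
      linear_combination α (1,0) * hu2 - β (1,0) * hu1
    have e1 : u.1 = 0 := (mul_eq_zero.mp h1).resolve_right hΔ
    have e2 : u.2 = 0 := (mul_eq_zero.mp h2).resolve_right hΔ
    exact Prod.ext_iff.mpr ⟨e1, e2⟩
  have part1 : ∀ v ∈ T, I • v ∈ T → v = 0 := by
    intro v hv hIv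
    rw [hT] at hv hIv
    have hα : α (I • v) = I * α v := by rw [map_smul, smul_eq_mul]
    have hβ : β (I • v) = I * β v := by rw [map_smul, smul_eq_mul]
    rw [hα, hβ, hv, map_mul, Complex.conj_I] at hIv
    have hA : α v = 0 := by
      have h0 : (starRingEnd ℂ) (α v) = 0 := by
        have : (2 * I) * (starRingEnd ℂ) (α v) = 0 := by linear_combination hIv
        simpa [Complex.I_ne_zero] using this
      simpa using congrArg (starRingEnd ℂ) h0
    have hB : β v = 0 := by rw [hv, hA, map_zero]
    exact kill v hA hB
  -- the distinguished vector in K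
  set v₀ : ℂ × ℂ := (Qp, -Pp) with hv₀def
  have hv₀ne : v₀ ≠ 0 := by
    intro h
    rw [Prod.ext_iff] at h
    exact hPQ ⟨neg_eq_zero.mp h.2, h.1⟩
  have hv₀K : Pp * v₀.1 + Qp * v₀.2 = 0 := by simp [hv₀def]; ring
  have hAB := hker v₀ hv₀K
  have hA : α v₀ ≠ 0 := by
    intro h0
    have hB : β v₀ = 0 := by
      rw [h0, mul_zero, zero_add] at hAB
      exact (mul_eq_zero.mp hAB).resolve_left hfp
    exact hv₀ne (kill v₀ h0 hB)
  set μ : ℂ := I * (starRingEnd ℂ) (α v₀) * fp with hμdef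
  have hμ : μ ≠ 0 := by
    simp [hμdef, Complex.I_ne_zero, hfp, hA]
  set w : ℂ × ℂ := μ • v₀ with hwdef
  have hwne : w ≠ 0 := smul_ne_zero hμ hv₀ne
  have hwK : w ∈ K := by
    rw [hK, hwdef]
    simp [hv₀def, smul_eq_mul]
    ring
  have hcm : (starRingEnd ℂ) μ = -(I * α v₀ * (starRingEnd ℂ) fp) := by
    rw [hμdef]; simp [map_mul, Complex.conj_I]; try ring
  have keyeq : fp * (μ * β v₀) = fp * ((starRingEnd ℂ) μ * (starRingEnd ℂ) (α v₀)) := by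
    rw [hcm, hμdef]
    linear_combination (I * (starRingEnd ℂ) (α v₀) * fp) * hAB
  have hwT : w ∈ T := by
    rw [hT, hwdef]
    have h1 : α (μ • v₀) = μ * α v₀ := by rw [map_smul, smul_eq_mul]
    have h2 : β (μ • v₀) = μ * β v₀ := by rw [map_smul, smul_eq_mul]
    rw [h1, h2, map_mul]
    exact mul_left_cancel₀ hfp keyeq
  -- real scalar coercion fact
  have hrs : ∀ (r : ℝ) (u : ℂ × ℂ), (r : ℂ) • u = r • u := by
    intro r u
    rw [← Complex.coe_algebraMap, algebraMap_smul]
  have part2 : T ⊓ K = Submodule.span ℝ {w} := by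
    apply le_antisymm
    · intro u hu
      rw [Submodule.mem_inf] at hu
      obtain ⟨huT, huK⟩ := hu
      rw [hK] at huK
      obtain ⟨z, hz⟩ : ∃ z : ℂ, u = z • v₀ := by
        rcases not_and_or.mp hPQ with hP0 | hQ0
        · refine ⟨-u.2 / Pp, ?_⟩
          have h2 : (-u.2 / Pp) * (-Pp) = u.2 := by field_simp
          have h1 : (-u.2 / Pp) * Qp = u.1 := by
            field_simp
            linear_combination -huK
          exact Prod.ext_iff.mpr ⟨h1.symm, h2.symm⟩
        · refine ⟨u.1 / Qp, ?_⟩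
          have h1 : (u.1 / Qp) * Qp = u.1 := by field_simp
          have h2 : (u.1 / Qp) * (-Pp) = u.2 := by
            field_simp
            linear_combination -huK
          exact Prod.ext_iff.mpr ⟨h1.symm, h2.symm⟩
      set ζ : ℂ := z / μ with hζdef
      have hzw : u = ζ • w := by
        rw [hz, hwdef, smul_smul, hζdef, div_mul_cancel₀ z hμ]
      have hdecomp : u = ζ.re • w + ζ.im • (I • w) := by
        rw [hzw]
        calc ζ • w = ((ζ.re : ℂ) + (ζ.im : ℂ) * I) • w := by rw [Complex.re_add_im]
          _ = (ζ.re : ℂ) • w + ((ζ.im : ℂ) * I) • w := add_smul _ _ _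
          _ = ζ.re • w + ζ.im • (I • w) := by rw [mul_smul, hrs, hrs]
      by_cases him : ζ.im = 0
      · rw [Submodule.mem_span_singleton]
        refine ⟨ζ.re, ?_⟩
        rw [hdecomp, him, zero_smul, add_zero]
      · exfalso
        have hIw : I • w ∈ T := by
          have : I • w = (ζ.im)⁻¹ • (u - ζ.re • w) := by
            rw [hdecomp, add_sub_cancel_left, inv_smul_smul₀ him]
          rw [this]
          exact T.smul_mem _ (T.sub_mem huT (T.smul_mem _ hwT))
        exact hwne (part1 w hwT hIw)
    · rw [Submodule.span_singleton_le_iff_mem]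
      exact ⟨hwT, hwK⟩
  exact ⟨part1, by rw [part2]; exact finrank_span_singleton hwne⟩

private lemma det_ne_zero_of_indep {A B : (ℂ × ℂ) →L[ℂ] ℂ}
    (h : LinearIndependent ℂ ![A, B]) :
    A (1,0) * B (0,1) - A (0,1) * B (1,0) ≠ 0 := by
  intro hΔ
  have key : ∀ s t : ℂ, s * A (1,0) + t * B (1,0) = 0 → s * A (0,1) + t * B (0,1) = 0 →
      s = 0 ∧ t = 0 := by
    intro s t h1 h2
    refine (LinearIndependent.pair_iff.mp h) s t ?_
    refine ContinuousLinearMap.ext fun v => ?_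
    simp only [ContinuousLinearMap.add_apply, ContinuousLinearMap.coe_smul',
      Pi.smul_apply, smul_eq_mul, ContinuousLinearMap.zero_apply]
    rw [clm_apply_eq' A v, clm_apply_eq' B v]
    linear_combination v.1 * h1 + v.2 * h2
  by_cases ha : A (1,0) = 0
  · by_cases hb : A (0,1) = 0
    · exact one_ne_zero (key 1 0 (by rw [ha]; ring) (by rw [hb]; ring)).1
    · exact hb (neg_eq_zero.mp (key (B (0,1)) (-A (0,1))
        (by linear_combination hΔ) (by ring)).2)
  · exact ha (neg_eq_zero.mp (key (B (1,0)) (-A (1,0))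
      (by ring) (by linear_combination -hΔ)).2)

set_option maxHeartbeats 2000000 in
/-- If the foliation defined by `ω = x dy + y dx + ω̃` (here written
`ω = P dx + Q dy` with `P = y + h.o.t.`, `Q = x + h.o.t.`) admits a holomorphic
first integral `f·g` with `f, g` vanishing at `0` and in general position, then
`V = {Re f = Re g} ∩ {Im f = −Im g}` passes through `0`, is totally real off
the origin, has contact order one with the foliation off the origin, and the
leaves of the restricted foliation near `0` — the level sets of `|f|` in `V` —
are compact: the restriction is a center type singularity. -/
theorem totally_real_center_from_product_first_integral
    (P Q : ℂ × ℂ → ℂ) (hP : AnalyticAt ℂ P 0) (hQ : AnalyticAt ℂ Q 0)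
    (hPlin : (fun p : ℂ × ℂ => P p - p.2) =o[nhds (0 : ℂ × ℂ)] fun p => ‖p‖)
    (hQlin : (fun p : ℂ × ℂ => Q p - p.1) =o[nhds (0 : ℂ × ℂ)] fun p => ‖p‖)
    (f g : ℂ × ℂ → ℂ) (hf : AnalyticAt ℂ f 0) (hg : AnalyticAt ℂ g 0)
    (hf0 : f 0 = 0) (hg0 : g 0 = 0)
    (hgen : LinearIndependent ℂ ![fderiv ℂ f 0, fderiv ℂ g 0])
    -- `f·g` is a first integral of `ω = P dx + Q dy` : `d(fg) ∧ ω = 0`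
    (hint : ∀ᶠ p in nhds (0 : ℂ × ℂ),
      fderiv ℂ (fun q => f q * g q) p (1, 0) * Q p =
      fderiv ℂ (fun q => f q * g q) p (0, 1) * P p)
    (V : Set (ℂ × ℂ))
    (hV : V = {p | (f p).re = (g p).re} ∩ {p | (f p).im = -(g p).im})
    (F : ℂ × ℂ → ℝ × ℝ)
    (hF : F = fun p => ((f p - g p).re, (f p + g p).im))
    -- tangent space of `V` at `p` and tangent space of the foliation at `p`
    (T : ℂ × ℂ → Submodule ℝ (ℂ × ℂ))
    (hT : T = fun p => LinearMap.ker
      ((fderiv ℝ F p : ℂ × ℂ →L[ℝ] ℝ × ℝ) : ℂ × ℂ →ₗ[ℝ] ℝ × ℝ))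
    (K : ℂ × ℂ → Submodule ℝ (ℂ × ℂ))
    (hK : K = fun p => LinearMap.ker (LinearMap.restrictScalars ℝ
      (P p • LinearMap.fst ℂ ℂ ℂ + Q p • LinearMap.snd ℂ ℂ ℂ))) :
    (0 : ℂ × ℂ) ∈ V ∧
    ∃ U ∈ nhds (0 : ℂ × ℂ), ∀ p ∈ (V ∩ U) \ {0},
      -- `V` is totally real at `p`
      (∀ v ∈ T p, I • v ∈ T p → v = 0) ∧
      -- contact order one with the foliation
      Module.finrank ℝ ↥(T p ⊓ K p) = 1 ∧
      -- the leaf of the restricted foliation through `p` is compact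
      IsCompact {q ∈ V ∩ U | ‖f q‖ = ‖f p‖} := by

  have hmem0 : (0 : ℂ × ℂ) ∈ V := by
    rw [hV]
    exact ⟨by simp [hf0, hg0], by simp [hf0, hg0]⟩
  refine ⟨hmem0, ?_⟩
  have hΔ0 := det_ne_zero_of_indep hgen
  have E1 := hf.eventually_analyticAt
  have E2 := hg.eventually_analyticAt
  -- eventual nonvanishing of the determinant
  have hcf : ContinuousAt (fun p => (fderiv ℂ f p) (1,0) * (fderiv ℂ g p) (0,1)
      - (fderiv ℂ f p) (0,1) * (fderiv ℂ g p) (1,0)) 0 := by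
    have c1 : ContinuousAt (fderiv ℂ f) 0 := hf.fderiv.continuousAt
    have c2 : ContinuousAt (fderiv ℂ g) 0 := hg.fderiv.continuousAt
    exact ((((ContinuousLinearMap.apply ℂ ℂ ((1:ℂ),(0:ℂ))).continuous.continuousAt).comp c1).mul
      (((ContinuousLinearMap.apply ℂ ℂ ((0:ℂ),(1:ℂ))).continuous.continuousAt).comp c2)).sub
      ((((ContinuousLinearMap.apply ℂ ℂ ((0:ℂ),(1:ℂ))).continuous.continuousAt).comp c1).mul
      (((ContinuousLinearMap.apply ℂ ℂ ((1:ℂ),(0:ℂ))).continuous.continuousAt).comp c2))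
  have EΔ : ∀ᶠ p in nhds (0:ℂ × ℂ), (fderiv ℂ f p) (1,0) * (fderiv ℂ g p) (0,1)
      - (fderiv ℂ f p) (0,1) * (fderiv ℂ g p) (1,0) ≠ 0 := hcf.eventually_ne hΔ0
  -- eventually (P,Q) vanishes only at 0
  have E4 : ∀ᶠ p in nhds (0:ℂ × ℂ), (P p = 0 ∧ Q p = 0 → p = 0) := by
    filter_upwards [hPlin.def one_half_pos, hQlin.def one_half_pos] with p h1 h2 hPQ
    rw [hPQ.1, zero_sub, norm_neg, norm_norm] at h1
    rw [hPQ.2, zero_sub, norm_neg, norm_norm] at h2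
    have hmax : max ‖p.1‖ ‖p.2‖ ≤ 1/2 * ‖p‖ := max_le (by linarith) (by linarith)
    rw [← Prod.norm_def] at hmax
    have h0 : ‖p‖ = 0 := by linarith [norm_nonneg p]
    simpa using h0
  -- eventually (f,g) vanishes only at 0
  have hfo : (fun p : ℂ × ℂ => f p - (fderiv ℂ f 0) p) =o[nhds (0:ℂ × ℂ)] fun p => p := by
    have h := (hf.differentiableAt.hasFDerivAt).isLittleO
    simpa [hf0] using h
  have hgo : (fun p : ℂ × ℂ => g p - (fderiv ℂ g 0) p) =o[nhds (0:ℂ × ℂ)] fun p => p := by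
    have h := (hg.differentiableAt.hasFDerivAt).isLittleO
    simpa [hg0] using h
  have hD : (0:ℝ) < ‖(fderiv ℂ f 0) (1,0) * (fderiv ℂ g 0) (0,1)
      - (fderiv ℂ f 0) (0,1) * (fderiv ℂ g 0) (1,0)‖ := norm_pos_iff.mpr hΔ0
  set D : ℝ := ‖(fderiv ℂ f 0) (1,0) * (fderiv ℂ g 0) (0,1)
      - (fderiv ℂ f 0) (0,1) * (fderiv ℂ g 0) (1,0)‖ with hDdef
  set C : ℝ := ‖(fderiv ℂ f 0) (1,0)‖ + ‖(fderiv ℂ f 0) (0,1)‖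
      + ‖(fderiv ℂ g 0) (1,0)‖ + ‖(fderiv ℂ g 0) (0,1)‖ + 1 with hCdef
  have hC : (0:ℝ) < C := by
    rw [hCdef]; positivity
  have hε : (0:ℝ) < D / (2*C) := by positivity
  have E5 : ∀ᶠ p in nhds (0:ℂ × ℂ), (f p = 0 ∧ g p = 0 → p = 0) := by
    filter_upwards [hfo.def hε, hgo.def hε] with p h1 h2 hfg
    rw [hfg.1, zero_sub, norm_neg] at h1
    rw [hfg.2, zero_sub, norm_neg] at h2
    -- h1 : ‖(fderiv ℂ f 0) p‖ ≤ D/(2C) * ‖p‖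
    have nn1 : (0:ℝ) ≤ ‖(fderiv ℂ f 0) (0,1)‖ := norm_nonneg _
    have nn2 : (0:ℝ) ≤ ‖(fderiv ℂ g 0) (0,1)‖ := norm_nonneg _
    have nn3 : (0:ℝ) ≤ ‖(fderiv ℂ f 0) (1,0)‖ := norm_nonneg _
    have nn4 : (0:ℝ) ≤ ‖(fderiv ℂ g 0) (1,0)‖ := norm_nonneg _
    have hnp : (0:ℝ) ≤ ‖p‖ := norm_nonneg _
    have k1 : D * ‖p.1‖ ≤ D/2 * ‖p‖ := by
      have e : (fderiv ℂ f 0) (1,0) * (fderiv ℂ g 0) (0,1) * p.1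
          - (fderiv ℂ f 0) (0,1) * (fderiv ℂ g 0) (1,0) * p.1
          = (fderiv ℂ g 0) (0,1) * ((fderiv ℂ f 0) p) - (fderiv ℂ f 0) (0,1) * ((fderiv ℂ g 0) p) := by
        rw [clm_apply_eq' (fderiv ℂ f 0) p, clm_apply_eq' (fderiv ℂ g 0) p]; ring
      have : D * ‖p.1‖ = ‖(fderiv ℂ g 0) (0,1) * ((fderiv ℂ f 0) p)
          - (fderiv ℂ f 0) (0,1) * ((fderiv ℂ g 0) p)‖ := by
        rw [hDdef, ← norm_mul, sub_mul, e]
      rw [this]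
      calc ‖(fderiv ℂ g 0) (0,1) * ((fderiv ℂ f 0) p) - (fderiv ℂ f 0) (0,1) * ((fderiv ℂ g 0) p)‖
          ≤ ‖(fderiv ℂ g 0) (0,1)‖ * ‖(fderiv ℂ f 0) p‖
            + ‖(fderiv ℂ f 0) (0,1)‖ * ‖(fderiv ℂ g 0) p‖ := by
            refine (norm_sub_le _ _).trans ?_
            rw [norm_mul, norm_mul]
        _ ≤ ‖(fderiv ℂ g 0) (0,1)‖ * (D/(2*C) * ‖p‖)
            + ‖(fderiv ℂ f 0) (0,1)‖ * (D/(2*C) * ‖p‖) := by gcongr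
        _ = (‖(fderiv ℂ g 0) (0,1)‖ + ‖(fderiv ℂ f 0) (0,1)‖) * (D/(2*C) * ‖p‖) := by ring
        _ ≤ C * (D/(2*C) * ‖p‖) := by
            have hle : ‖(fderiv ℂ g 0) (0,1)‖ + ‖(fderiv ℂ f 0) (0,1)‖ ≤ C := by
              rw [hCdef]; linarith
            have he : (0:ℝ) ≤ D/(2*C) * ‖p‖ := by positivity
            exact mul_le_mul_of_nonneg_right hle he
        _ = D/2 * ‖p‖ := by field_simp
    have k2 : D * ‖p.2‖ ≤ D/2 * ‖p‖ := by
      have e : (fderiv ℂ f 0) (1,0) * (fderiv ℂ g 0) (0,1) * p.2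
          - (fderiv ℂ f 0) (0,1) * (fderiv ℂ g 0) (1,0) * p.2
          = (fderiv ℂ f 0) (1,0) * ((fderiv ℂ g 0) p) - (fderiv ℂ g 0) (1,0) * ((fderiv ℂ f 0) p) := by
        rw [clm_apply_eq' (fderiv ℂ f 0) p, clm_apply_eq' (fderiv ℂ g 0) p]; ring
      have : D * ‖p.2‖ = ‖(fderiv ℂ f 0) (1,0) * ((fderiv ℂ g 0) p)
          - (fderiv ℂ g 0) (1,0) * ((fderiv ℂ f 0) p)‖ := by
        rw [hDdef, ← norm_mul, sub_mul, e]
      rw [this]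
      calc ‖(fderiv ℂ f 0) (1,0) * ((fderiv ℂ g 0) p) - (fderiv ℂ g 0) (1,0) * ((fderiv ℂ f 0) p)‖
          ≤ ‖(fderiv ℂ f 0) (1,0)‖ * ‖(fderiv ℂ g 0) p‖
            + ‖(fderiv ℂ g 0) (1,0)‖ * ‖(fderiv ℂ f 0) p‖ := by
            refine (norm_sub_le _ _).trans ?_
            rw [norm_mul, norm_mul]
        _ ≤ ‖(fderiv ℂ f 0) (1,0)‖ * (D/(2*C) * ‖p‖)
            + ‖(fderiv ℂ g 0) (1,0)‖ * (D/(2*C) * ‖p‖) := by gcongr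
        _ = (‖(fderiv ℂ f 0) (1,0)‖ + ‖(fderiv ℂ g 0) (1,0)‖) * (D/(2*C) * ‖p‖) := by ring
        _ ≤ C * (D/(2*C) * ‖p‖) := by
            have hle : ‖(fderiv ℂ f 0) (1,0)‖ + ‖(fderiv ℂ g 0) (1,0)‖ ≤ C := by
              rw [hCdef]; linarith
            have he : (0:ℝ) ≤ D/(2*C) * ‖p‖ := by positivity
            exact mul_le_mul_of_nonneg_right hle he
        _ = D/2 * ‖p‖ := by field_simp
    have h1' : ‖p.1‖ ≤ ‖p‖/2 :=
      le_of_mul_le_mul_left (by linarith [k1]) hD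
    have h2' : ‖p.2‖ ≤ ‖p‖/2 :=
      le_of_mul_le_mul_left (by linarith [k2]) hD
    have hmax : max ‖p.1‖ ‖p.2‖ ≤ ‖p‖/2 := max_le h1' h2'
    rw [← Prod.norm_def] at hmax
    have h0 : ‖p‖ = 0 := by linarith
    simpa using h0
  have Hall := E1.and (E2.and (EΔ.and (hint.and (E4.and E5))))
  rw [Metric.eventually_nhds_iff_ball] at Hall
  obtain ⟨r, hr, hball⟩ := Hall
  set U := Metric.closedBall (0:ℂ × ℂ) (r/2) with hUdef
  have hUsub : U ⊆ Metric.ball 0 r := Metric.closedBall_subset_ball (by linarith)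
  refine ⟨U, Metric.closedBall_mem_nhds _ (by positivity), ?_⟩
  have hfc : ContinuousOn f U := fun q hq => ((hball q (hUsub hq)).1.continuousAt).continuousWithinAt
  have hgc : ContinuousOn g U := fun q hq => ((hball q (hUsub hq)).2.1.continuousAt).continuousWithinAt
  rintro p ⟨⟨hpV, hpU⟩, hpne⟩
  simp only [Set.mem_singleton_iff] at hpne
  obtain ⟨hfa, hga, hΔp, hintp, hPQ0, hfg0'⟩ := hball p (hUsub hpU)
  have hfd : DifferentiableAt ℂ f p := hfa.differentiableAt
  have hgd : DifferentiableAt ℂ g p := hga.differentiableAt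
  have hVp : g p = (starRingEnd ℂ) (f p) := by
    rw [hV] at hpV
    obtain ⟨h1, h2⟩ := hpV
    simp only [Set.mem_setOf_eq] at h1 h2
    apply Complex.ext
    · simpa using h1.symm
    · simp only [Complex.conj_im]
      linarith
  have hfpne : f p ≠ 0 := by
    intro h0
    exact hpne (hfg0' ⟨h0, by rw [hVp, h0, map_zero]⟩)
  have hPQ : ¬(P p = 0 ∧ Q p = 0) := fun h => hpne (hPQ0 h)
  -- first integral relation at p
  have hprod := fderiv_fun_mul hfd hgd
  rw [hprod] at hintp
  simp only [ContinuousLinearMap.add_apply, ContinuousLinearMap.coe_smul',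
    Pi.smul_apply, smul_eq_mul] at hintp
  rw [hVp] at hintp
  have hker : ∀ v : ℂ × ℂ, P p * v.1 + Q p * v.2 = 0 →
      (starRingEnd ℂ) (f p) * (fderiv ℂ f p) v + f p * (fderiv ℂ g p) v = 0 := by
    intro v hv
    rw [clm_apply_eq' (fderiv ℂ f p) v, clm_apply_eq' (fderiv ℂ g p) v]
    rcases not_and_or.mp hPQ with h | h
    · apply mul_left_cancel₀ h
      rw [mul_zero]
      linear_combination (f p * (fderiv ℂ g p) (1,0) + (starRingEnd ℂ) (f p) * (fderiv ℂ f p) (1,0)) * hv - v.2 * hintp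
    · apply mul_left_cancel₀ h
      rw [mul_zero]
      linear_combination (f p * (fderiv ℂ g p) (0,1) + (starRingEnd ℂ) (f p) * (fderiv ℂ f p) (0,1)) * hv + v.1 * hintp
  -- the derivative of F at p
  have hFd : HasFDerivAt F
      ((Complex.reCLM.comp (((fderiv ℂ f p) - (fderiv ℂ g p)).restrictScalars ℝ)).prod
       (Complex.imCLM.comp (((fderiv ℂ f p) + (fderiv ℂ g p)).restrictScalars ℝ))) p := by
    rw [hF]
    have h1 : HasFDerivAt f ((fderiv ℂ f p).restrictScalars ℝ) p := (hfd.hasFDerivAt).restrictScalars ℝ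
    have h2 : HasFDerivAt g ((fderiv ℂ g p).restrictScalars ℝ) p := (hgd.hasFDerivAt).restrictScalars ℝ
    exact HasFDerivAt.prodMk ((Complex.reCLM.hasFDerivAt).comp p (h1.sub h2))
          ((Complex.imCLM.hasFDerivAt).comp p (h1.add h2))
  have hTmem : ∀ v : ℂ × ℂ, v ∈ T p ↔
      (fderiv ℂ g p) v = (starRingEnd ℂ) ((fderiv ℂ f p) v) := by
    intro v
    rw [hT]
    simp only [LinearMap.mem_ker, ContinuousLinearMap.coe_coe]
    rw [hFd.fderiv]
    simp only [ContinuousLinearMap.prod_apply, ContinuousLinearMap.coe_comp',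
      Function.comp_apply, ContinuousLinearMap.coe_restrictScalars',
      ContinuousLinearMap.coe_sub', ContinuousLinearMap.coe_add', Pi.sub_apply, Pi.add_apply,
      Complex.reCLM_apply, Complex.imCLM_apply, Prod.mk_eq_zero]
    rw [Complex.ext_iff]
    simp only [Complex.sub_re, Complex.add_im, Complex.conj_re, Complex.conj_im]
    constructor
    · rintro ⟨u1, u2⟩
      constructor <;> linarith
    · rintro ⟨u1, u2⟩
      constructor <;> linarith
  have hKmem : ∀ v : ℂ × ℂ, v ∈ K p ↔ P p * v.1 + Q p * v.2 = 0 := by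
    intro v
    rw [hK]
    simp [LinearMap.mem_ker, LinearMap.add_apply, LinearMap.smul_apply,
      LinearMap.fst_apply, LinearMap.snd_apply, smul_eq_mul]
  obtain ⟨ptr, pfin⟩ := pointwise_main (P p) (Q p) (f p) (fderiv ℂ f p) (fderiv ℂ g p)
    hΔp hPQ hfpne hker (T p) (K p) hTmem hKmem
  refine ⟨ptr, pfin, ?_⟩
  -- compactness of the leaf
  have hHc : ContinuousOn (fun q => ((f q).re - (g q).re,
      ((f q).im + (g q).im, ‖f q‖ - ‖f p‖))) U := by
    refine ContinuousOn.prodMk ?_ (ContinuousOn.prodMk ?_ ?_)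
    · exact (Complex.continuous_re.comp_continuousOn hfc).sub
        (Complex.continuous_re.comp_continuousOn hgc)
    · exact (Complex.continuous_im.comp_continuousOn hfc).add
        (Complex.continuous_im.comp_continuousOn hgc)
    · exact (continuous_norm.comp_continuousOn hfc).sub continuousOn_const
  have hclosed := hHc.preimage_isClosed_of_isClosed Metric.isClosed_closedBall
    (isClosed_singleton (x := ((0:ℝ),((0:ℝ),(0:ℝ)))))
  have hseteq : {q ∈ V ∩ U | ‖f q‖ = ‖f p‖} =
      U ∩ (fun q => ((f q).re - (g q).re,
        ((f q).im + (g q).im, ‖f q‖ - ‖f p‖))) ⁻¹'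
        {((0:ℝ),((0:ℝ),(0:ℝ)))} := by
    ext q
    simp only [hV, Set.mem_inter_iff, Set.mem_setOf_eq, Set.mem_preimage,
      Set.mem_singleton_iff, Prod.ext_iff]
    constructor
    · rintro ⟨⟨⟨u1, u2⟩, u3⟩, u4⟩
      exact ⟨u3, by linarith, by linarith, by linarith⟩
    · rintro ⟨u3, u1, u2, u4⟩
      exact ⟨⟨⟨by linarith, by linarith⟩, u3⟩, by linarith⟩
  rw [hseteq]
  exact (isCompact_closedBall _ _).of_isClosed_subset hclosed Set.inter_subset_left
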